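/- If all easy cycles have a gate-independent error, ν(E) = Λ∘φ(E) for a fixed CPTP map Λ and all easy gates E (including the Pauli twirling gates), then the effective dressed cycle error channel E_i = ⟨φ(E_i^{-1})φ(Q^{-1})φ(H_i^{-1})ν(H_i)ν(QE_iR)φ(R^{-1})⟩_{Q,R ∈ P_n} equals φ(E_i^{-1}) [φ(H_i^{-1})ν(H_i)Λ]^{P_n} φ(E_i), the conjugate by the ideal easy gate of the Pauli twirl of the hard-cycle error; in particular it is a Pauli stochastic channel conjugated by a fixed unitary channel, and when E_i is Clifford it is itself Pauli stochastic. -/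

import Mathlib

open Matrix Finset

/-- n-qubit Paulis (mod phase), identified with `(Z₂)^{2n}` via `P = Xᵃ Zᵇ`. -/
abbrev Pauli (n : ℕ) := (Fin n → ZMod 2) × (Fin n → ZMod 2)

/-- The standard symplectic form on `(Z₂)^{2n}`. -/
def symp {n : ℕ} (Q P : Pauli n) : ZMod 2 :=
  ∑ i, (Q.1 i * P.2 i + Q.2 i * P.1 i)

/-- The commutation character: `χ_Q(P) = 1` if `Q` and `P` commute, `-1` otherwise. -/
def chi {n : ℕ} (Q P : Pauli n) : ℤ := (-1) ^ (symp Q P).val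

/-- The Pauli operator `Xᵃ Zᵇ` as a `2ⁿ × 2ⁿ` matrix (indexed by bit strings). -/
def PauliOp {n : ℕ} (P : Pauli n) :
    Matrix (Fin n → ZMod 2) (Fin n → ZMod 2) ℂ :=
  fun s t => if s = t + P.1 then (-1 : ℂ) ^ (∑ i, P.2 i * t i).val else 0

lemma zmod2_cases (x : ZMod 2) : x = 0 ∨ x = 1 := by revert x; decide

lemma zmod2_val0 : ((0 : ZMod 2)).val = 0 := rfl
lemma zmod2_val1 : ((1 : ZMod 2)).val = 1 := rfl
lemma zmod2_oneone : (1 + 1 : ZMod 2) = 0 := by decide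

lemma negpow_add (x y : ZMod 2) :
    ((-1 : ℂ)) ^ (x + y).val = (-1) ^ x.val * (-1) ^ y.val := by
  rcases zmod2_cases x with h | h <;> rcases zmod2_cases y with h' | h' <;>
    subst h <;> subst h' <;>
    simp [zmod2_oneone, zmod2_val0, zmod2_val1]

lemma negpow_sq (x : ZMod 2) : ((-1 : ℂ)) ^ x.val * (-1) ^ x.val = 1 := by
  rcases zmod2_cases x with h | h <;> subst h <;>
    simp [zmod2_val0, zmod2_val1]

lemma dot_add_right {n : ℕ} (a b c : Fin n → ZMod 2) :
    (∑ i, a i * (b + c) i) = (∑ i, a i * b i) + (∑ i, a i * c i) := by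
  rw [← Finset.sum_add_distrib]; simp [mul_add]

lemma dot_add_left {n : ℕ} (a b c : Fin n → ZMod 2) :
    (∑ i, (a + b) i * c i) = (∑ i, a i * c i) + (∑ i, b i * c i) := by
  rw [← Finset.sum_add_distrib]; simp [add_mul]

lemma add_self_fun {n : ℕ} (a : Fin n → ZMod 2) : a + a = 0 := by
  funext i; exact CharTwo.add_self_eq_zero _

lemma PauliOp_zero {n : ℕ} : PauliOp (0 : Pauli n) = 1 := by
  ext s t
  simp [PauliOp, one_apply, eq_comm]

lemma PauliOp_mul {n : ℕ} (P Q : Pauli n) :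
    PauliOp P * PauliOp Q
      = ((-1 : ℂ) ^ (∑ i, P.2 i * Q.1 i).val) • PauliOp (P + Q) := by
  ext s t
  simp only [mul_apply, PauliOp, Matrix.smul_apply, smul_eq_mul]
  rw [Finset.sum_eq_single (t + Q.1)]
  · by_cases h : s = t + Q.1 + P.1
    · have h' : s = t + (P + Q).1 := by
        rw [h]; show t + Q.1 + P.1 = t + (P.1 + Q.1); abel
      rw [if_pos h, if_pos rfl, if_pos h']
      rw [dot_add_right, negpow_add, show (P + Q).2 = P.2 + Q.2 from rfl,
        dot_add_left, negpow_add]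
      ring
    · have h' : ¬ s = t + (P + Q).1 := by
        intro hc; exact h (by rw [hc]; show t + (P.1 + Q.1) = t + Q.1 + P.1; abel)
      rw [if_neg h, if_neg h', zero_mul, mul_zero]
  · intro u _ hu
    rw [if_neg hu, mul_zero]
  · simp

lemma PauliOp_conjT {n : ℕ} (P : Pauli n) :
    (PauliOp P)ᴴ = ((-1 : ℂ) ^ (∑ i, P.2 i * P.1 i).val) • PauliOp P := by
  ext s t
  simp only [conjTranspose_apply, PauliOp, Matrix.smul_apply, smul_eq_mul]
  have hiff : t = s + P.1 ↔ s = t + P.1 := by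
    constructor <;> intro h <;> rw [h]
    · rw [add_assoc, add_self_fun, add_zero]
    · rw [add_assoc, add_self_fun, add_zero]
  by_cases h : t = s + P.1
  · rw [if_pos h, if_pos (hiff.mp h)]
    have hs : (∑ i, P.2 i * s i) = (∑ i, P.2 i * t i) + ∑ i, P.2 i * P.1 i := by
      rw [hiff.mp h, dot_add_right]
    rw [hs, negpow_add]
    simp only [star_mul', star_pow, star_neg, star_one]
    ring
  · rw [if_neg h, if_neg (fun hc => h (hiff.mpr hc)), star_zero, mul_zero]

lemma PauliOp_unitary_left {n : ℕ} (P : Pauli n) : (PauliOp P)ᴴ * PauliOp P = 1 := by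
  rw [PauliOp_conjT, smul_mul_assoc, PauliOp_mul, smul_smul, negpow_sq, one_smul,
    show P + P = 0 from Prod.ext (add_self_fun _) (add_self_fun _), PauliOp_zero]

lemma PauliOp_unitary_right {n : ℕ} (P : Pauli n) : PauliOp P * (PauliOp P)ᴴ = 1 := by
  rw [PauliOp_conjT, mul_smul_comm, PauliOp_mul, smul_smul, negpow_sq, one_smul,
    show P + P = 0 from Prod.ext (add_self_fun _) (add_self_fun _), PauliOp_zero]

lemma symp_eq {n : ℕ} (Q P : Pauli n) :
    symp Q P = (∑ i, Q.2 i * P.1 i) + (∑ i, P.2 i * Q.1 i) := by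
  rw [symp, Finset.sum_add_distrib, add_comm]
  congr 1
  · exact Finset.sum_congr rfl (fun i _ => mul_comm _ _)

lemma PauliOp_conj {n : ℕ} (Q P : Pauli n) :
    (PauliOp Q)ᴴ * PauliOp P * PauliOp Q
      = ((-1 : ℂ) ^ (symp Q P).val) • PauliOp P := by
  rw [PauliOp_conjT Q, smul_mul_assoc, smul_mul_assoc, PauliOp_mul Q P,
    smul_mul_assoc, PauliOp_mul (Q + P) Q, smul_smul, smul_smul,
    show Q + P + Q = P from by
      apply Prod.ext
      · show Q.1 + P.1 + Q.1 = P.1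
        rw [add_comm Q.1 P.1, add_assoc, add_self_fun, add_zero]
      · show Q.2 + P.2 + Q.2 = P.2
        rw [add_comm Q.2 P.2, add_assoc, add_self_fun, add_zero]]
  congr 1
  rw [show (Q + P).2 = Q.2 + P.2 from rfl, dot_add_left, negpow_add,
    symp_eq, negpow_add]
  have h1 := negpow_sq (∑ i, Q.2 i * Q.1 i)
  ring_nf
  ring_nf at h1
  rw [h1, one_mul]

lemma charSum {n : ℕ} (b : Fin n → ZMod 2) :
    ∑ t : Fin n → ZMod 2, ((-1 : ℂ) ^ (∑ i, b i * t i).val) =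
      if b = 0 then (2 : ℂ) ^ n else 0 := by
  by_cases hb : b = 0
  · subst hb
    simp [zmod2_val0, Finset.card_univ]
  · rw [if_neg hb]
    obtain ⟨i, hi⟩ : ∃ i, b i ≠ 0 := by
      by_contra hc
      push_neg at hc
      exact hb (funext fun i => hc i)
    have hbi : b i = 1 := (zmod2_cases (b i)).resolve_left hi
    set c : Fin n → ZMod 2 := Pi.single i 1 with hc
    have hdbc : (∑ j, b j * c j) = 1 := by
      simp [hc, Pi.single_apply, mul_ite, hbi]
    have key : ∀ t, ((-1 : ℂ) ^ (∑ j, b j * (t + c) j).val)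
        = -((-1 : ℂ) ^ (∑ j, b j * t j).val) := by
      intro t
      rw [dot_add_right, hdbc, negpow_add, zmod2_val1]
      ring
    have hshift : ∑ t : Fin n → ZMod 2, ((-1 : ℂ) ^ (∑ j, b j * (t + c) j).val)
        = ∑ t : Fin n → ZMod 2, ((-1 : ℂ) ^ (∑ j, b j * t j).val) :=
      Fintype.sum_equiv (Equiv.addRight c) _ _ (fun t => rfl)
    rw [Finset.sum_congr rfl (fun t _ => key t), Finset.sum_neg_distrib] at hshift
    exact neg_eq_self.mp hshift


lemma pauli_add_self {n : ℕ} (P : Pauli n) : P + P = 0 :=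
  Prod.ext (add_self_fun _) (add_self_fun _)

lemma pauli_add_eq_zero_iff {n : ℕ} (a b : Pauli n) : a + b = 0 ↔ a = b := by
  constructor
  · intro h
    calc a = a + (b + b) := by rw [pauli_add_self, add_zero]
    _ = (a + b) + b := by rw [add_assoc]
    _ = b := by rw [h, zero_add]
  · intro h; subst h; exact pauli_add_self a

lemma symp_add_right {n : ℕ} (Q P P' : Pauli n) :
    symp Q (P + P') = symp Q P + symp Q P' := by
  rw [symp, symp, symp, ← Finset.sum_add_distrib]
  refine Finset.sum_congr rfl (fun i _ => ?_)
  show Q.1 i * (P.2 i + P'.2 i) + Q.2 i * (P.1 i + P'.1 i) = _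
  ring

lemma sympSum {n : ℕ} (R : Pauli n) :
    ∑ Q : Pauli n, ((-1 : ℂ) ^ (symp Q R).val) =
      if R = 0 then (4 : ℂ) ^ n else 0 := by
  have hsplit : ∀ Q : Pauli n,
      ((-1 : ℂ) ^ (symp Q R).val)
        = ((-1 : ℂ) ^ (∑ i, R.2 i * Q.1 i).val) *
          ((-1 : ℂ) ^ (∑ i, R.1 i * Q.2 i).val) := by
    intro Q
    have hsymp : symp Q R = (∑ i, R.2 i * Q.1 i) + (∑ i, R.1 i * Q.2 i) := by
      rw [symp, Finset.sum_add_distrib]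
      congr 1 <;> exact Finset.sum_congr rfl (fun i _ => mul_comm _ _)
    rw [hsymp, negpow_add]
  rw [Finset.sum_congr rfl (fun Q _ => hsplit Q), Fintype.sum_prod_type]
  simp only [Prod.fst, Prod.snd]
  rw [← Finset.sum_mul_sum, charSum, charSum]
  by_cases h1 : R.1 = 0 <;> by_cases h2 : R.2 = 0
  · rw [if_pos h2, if_pos h1, if_pos (Prod.ext h1 h2), ← mul_pow]
    norm_num
  · rw [if_neg h2, if_neg (fun hc : R = 0 => h2 (by rw [hc]; rfl)), zero_mul]
  · rw [if_neg h1, if_neg (fun hc : R = 0 => h1 (by rw [hc]; rfl)), mul_zero]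
  · rw [if_neg h2, if_neg (fun hc : R = 0 => h1 (by rw [hc]; rfl)), zero_mul]

lemma chiSum {n : ℕ} (P P' : Pauli n) :
    ∑ Q : Pauli n, ((-1 : ℂ) ^ (symp Q P).val) * ((-1 : ℂ) ^ (symp Q P').val) =
      if P = P' then (4 : ℂ) ^ n else 0 := by
  have : ∀ Q : Pauli n, ((-1 : ℂ) ^ (symp Q P).val) * ((-1 : ℂ) ^ (symp Q P').val)
      = ((-1 : ℂ) ^ (symp Q (P + P')).val) := by
    intro Q; rw [symp_add_right, negpow_add]
  rw [Finset.sum_congr rfl (fun Q _ => this Q), sympSum]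
  by_cases h : P = P'
  · rw [if_pos ((pauli_add_eq_zero_iff P P').mpr h), if_pos h]
  · rw [if_neg (fun hc => h ((pauli_add_eq_zero_iff P P').mp hc)), if_neg h]

lemma charSum' {n : ℕ} (v : Fin n → ZMod 2) :
    ∑ b : Fin n → ZMod 2, ((-1 : ℂ) ^ (∑ i, b i * v i).val) =
      if v = 0 then (2 : ℂ) ^ n else 0 := by
  rw [show (∑ b : Fin n → ZMod 2, ((-1 : ℂ) ^ (∑ i, b i * v i).val))
      = ∑ b : Fin n → ZMod 2, ((-1 : ℂ) ^ (∑ i, v i * b i).val) from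
    Finset.sum_congr rfl (fun b _ => by
      rw [Finset.sum_congr rfl (fun i (_ : i ∈ Finset.univ) => mul_comm (b i) (v i))]),
    charSum]

lemma fun_add_eq_zero_iff {n : ℕ} (a b : Fin n → ZMod 2) : a + b = 0 ↔ a = b := by
  constructor
  · intro h
    calc a = a + (b + b) := by rw [add_self_fun, add_zero]
    _ = (a + b) + b := by rw [add_assoc]
    _ = b := by rw [h, zero_add]
  · intro h; subst h; exact add_self_fun a

noncomputable def pcoef {n : ℕ} (P : Pauli n)
    (A : Matrix (Fin n → ZMod 2) (Fin n → ZMod 2) ℂ) : ℂ :=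
  ((2 : ℂ) ^ n)⁻¹ * ∑ t, ((-1 : ℂ) ^ (∑ i, P.2 i * t i).val) * A (t + P.1) t

lemma pauli_expand {n : ℕ} (A : Matrix (Fin n → ZMod 2) (Fin n → ZMod 2) ℂ) :
    A = ∑ P : Pauli n, pcoef P A • PauliOp P := by
  have h2n : ((2 : ℂ) ^ n) ≠ 0 := pow_ne_zero _ two_ne_zero
  ext s t
  symm
  rw [Matrix.sum_apply]
  simp only [Matrix.smul_apply, smul_eq_mul]
  rw [Fintype.sum_prod_type]
  simp only [PauliOp, Prod.fst, Prod.snd]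
  rw [Finset.sum_eq_single (s + t)]
  · have hst : s = t + (s + t) := by
      rw [add_comm s t, ← add_assoc, add_self_fun, zero_add]
    have hb : ∀ b : Fin n → ZMod 2,
        pcoef (s + t, b) A * (if s = t + (s + t) then ((-1 : ℂ) ^ (∑ i, b i * t i).val) else 0)
          = ∑ u, ((2 : ℂ) ^ n)⁻¹ *
              (A (u + (s + t)) u * ((-1 : ℂ) ^ (∑ i, b i * (u + t) i).val)) := by
      intro b
      rw [if_pos hst, pcoef, mul_assoc, Finset.sum_mul, Finset.mul_sum]
      refine Finset.sum_congr rfl (fun u _ => ?_)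
      rw [dot_add_right, negpow_add]
      ring
    rw [Finset.sum_congr rfl (fun b _ => hb b), Finset.sum_comm]
    have hu : ∀ u : Fin n → ZMod 2,
        (∑ b : Fin n → ZMod 2, ((2 : ℂ) ^ n)⁻¹ *
            (A (u + (s + t)) u * ((-1 : ℂ) ^ (∑ i, b i * (u + t) i).val)))
          = if u = t then A s t else 0 := by
      intro u
      rw [← Finset.mul_sum, ← Finset.mul_sum, charSum']
      by_cases h : u = t
      · rw [if_pos ((fun_add_eq_zero_iff u t).mpr h), if_pos h, h, ← hst]
        field_simp
      · rw [if_neg (fun hc => h ((fun_add_eq_zero_iff u t).mp hc)), if_neg h,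
          mul_zero, mul_zero]
    rw [Finset.sum_congr rfl (fun u _ => hu u), Finset.sum_ite_eq' Finset.univ t]
    rw [if_pos (Finset.mem_univ t)]
  · intro a _ ha
    have hna : ¬ s = t + a := by
      intro hc
      exact ha (by rw [hc, add_comm t a, add_assoc, add_self_fun, add_zero])
    exact Finset.sum_eq_zero (fun b _ => by rw [if_neg hna, mul_zero])
  · simp

lemma star_negpow (k : ℕ) : star ((-1 : ℂ) ^ k) = (-1 : ℂ) ^ k := by
  rw [star_pow, star_neg, star_one]

lemma conj_unitary_step {n : ℕ} (Q : Pauli n)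
    (B σ : Matrix (Fin n → ZMod 2) (Fin n → ZMod 2) ℂ) :
    (PauliOp Q)ᴴ * (B * (PauliOp Q * σ * (PauliOp Q)ᴴ) * Bᴴ) * PauliOp Q
      = ((PauliOp Q)ᴴ * B * PauliOp Q) * σ * ((PauliOp Q)ᴴ * B * PauliOp Q)ᴴ := by
  simp only [conjTranspose_mul, conjTranspose_conjTranspose, Matrix.mul_assoc]

lemma conj_expand {n : ℕ} (Q : Pauli n)
    (B : Matrix (Fin n → ZMod 2) (Fin n → ZMod 2) ℂ) :
    (PauliOp Q)ᴴ * B * PauliOp Q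
      = ∑ P : Pauli n, (pcoef P B * ((-1 : ℂ) ^ (symp Q P).val)) • PauliOp P := by
  conv_lhs => rw [pauli_expand B]
  rw [Finset.mul_sum, Finset.sum_mul]
  refine Finset.sum_congr rfl (fun P _ => ?_)
  rw [mul_smul_comm, smul_mul_assoc, PauliOp_conj, smul_smul]

lemma twirl_one {n : ℕ} (B σ : Matrix (Fin n → ZMod 2) (Fin n → ZMod 2) ℂ) :
    ∑ Q : Pauli n,
        (PauliOp Q)ᴴ * (B * (PauliOp Q * σ * (PauliOp Q)ᴴ) * Bᴴ) * PauliOp Q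
      = (4 : ℂ) ^ n • ∑ P : Pauli n,
          ((Complex.normSq (pcoef P B) : ℂ)) • (PauliOp P * σ * (PauliOp P)ᴴ) := by
  have hQ : ∀ Q : Pauli n,
      (PauliOp Q)ᴴ * (B * (PauliOp Q * σ * (PauliOp Q)ᴴ) * Bᴴ) * PauliOp Q
        = ∑ P : Pauli n, ∑ P' : Pauli n,
            ((pcoef P B * ((-1 : ℂ) ^ (symp Q P).val)) *
              star (pcoef P' B) * ((-1 : ℂ) ^ (symp Q P').val)) •
              (PauliOp P * σ * (PauliOp P')ᴴ) := by
    intro Q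
    rw [conj_unitary_step, conj_expand]
    rw [conjTranspose_sum]
    simp only [conjTranspose_smul]
    rw [Finset.sum_mul, Finset.sum_mul]
    refine Finset.sum_congr rfl (fun P _ => ?_)
    rw [smul_mul_assoc, Finset.mul_sum]
    refine Finset.sum_congr rfl (fun P' _ => ?_)
    rw [mul_smul_comm, smul_mul_assoc, smul_smul, Matrix.mul_assoc,
      star_mul', star_negpow]
    congr 1
    ring
  rw [Finset.sum_congr rfl (fun Q (_ : Q ∈ Finset.univ) => hQ Q), Finset.sum_comm]
  rw [Finset.smul_sum]
  refine Finset.sum_congr rfl (fun P _ => ?_)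
  rw [Finset.sum_comm]
  have key : ∀ P' : Pauli n,
      (∑ Q : Pauli n,
        ((pcoef P B * ((-1 : ℂ) ^ (symp Q P).val)) *
          star (pcoef P' B) * ((-1 : ℂ) ^ (symp Q P').val)) •
          (PauliOp P * σ * (PauliOp P')ᴴ))
      = if P = P' then
          (((4 : ℂ) ^ n * (pcoef P B * star (pcoef P' B))) •
            (PauliOp P * σ * (PauliOp P')ᴴ)) else 0 := by
    intro P'
    rw [← Finset.sum_smul]
    have : (∑ Q : Pauli n,
        (pcoef P B * ((-1 : ℂ) ^ (symp Q P).val)) *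
          star (pcoef P' B) * ((-1 : ℂ) ^ (symp Q P').val))
        = (pcoef P B * star (pcoef P' B)) *
            ∑ Q : Pauli n, ((-1 : ℂ) ^ (symp Q P).val) * ((-1 : ℂ) ^ (symp Q P').val) := by
      rw [Finset.mul_sum]
      exact Finset.sum_congr rfl (fun Q _ => by ring)
    rw [this, chiSum]
    by_cases h : P = P'
    · rw [if_pos h, if_pos h]
      congr 1
      ring
    · rw [if_neg h, if_neg h, mul_zero, zero_smul]
  rw [Finset.sum_congr rfl (fun P' (_ : P' ∈ Finset.univ) => key P'),
    Finset.sum_ite_eq Finset.univ P, if_pos (Finset.mem_univ P)]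
  rw [smul_smul]
  congr 1
  rw [show star (pcoef P B) = (starRingEnd ℂ) (pcoef P B) from rfl, Complex.mul_conj]

lemma twirl_kraus {n m : ℕ} (K : Fin m → Matrix (Fin n → ZMod 2) (Fin n → ZMod 2) ℂ)
    (σ : Matrix (Fin n → ZMod 2) (Fin n → ZMod 2) ℂ) :
    ((4 : ℂ) ^ n)⁻¹ • ∑ Q : Pauli n,
        (PauliOp Q)ᴴ * (∑ k, K k * (PauliOp Q * σ * (PauliOp Q)ᴴ) * (K k)ᴴ) * PauliOp Q
      = ∑ P : Pauli n,
          (((∑ k, Complex.normSq (pcoef P (K k))) : ℝ) : ℂ) •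
            (PauliOp P * σ * (PauliOp P)ᴴ) := by
  have h4 : ((4 : ℂ) ^ n) ≠ 0 := pow_ne_zero _ (by norm_num)
  have hsplit : ∀ Q : Pauli n,
      (PauliOp Q)ᴴ * (∑ k, K k * (PauliOp Q * σ * (PauliOp Q)ᴴ) * (K k)ᴴ) * PauliOp Q
        = ∑ k, (PauliOp Q)ᴴ * (K k * (PauliOp Q * σ * (PauliOp Q)ᴴ) * (K k)ᴴ) * PauliOp Q := by
    intro Q
    rw [Finset.mul_sum, Finset.sum_mul]
  rw [Finset.sum_congr rfl (fun Q (_ : Q ∈ Finset.univ) => hsplit Q), Finset.sum_comm]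
  rw [Finset.sum_congr rfl (fun k (_ : k ∈ Finset.univ) => twirl_one (K k) σ)]
  rw [← Finset.smul_sum, smul_smul, inv_mul_cancel₀ h4, one_smul, Finset.sum_comm]
  refine Finset.sum_congr rfl (fun P _ => ?_)
  rw [← Finset.sum_smul]
  congr 1
  push_cast
  rfl

lemma trace_conj_unitary {n : ℕ} (U A : Matrix (Fin n → ZMod 2) (Fin n → ZMod 2) ℂ)
    (hU : U * Uᴴ = 1) : (Uᴴ * A * U).trace = A.trace := by
  rw [Matrix.trace_mul_cycle, hU, Matrix.one_mul]

lemma q_sum_one {n m : ℕ} (K : Fin m → Matrix (Fin n → ZMod 2) (Fin n → ZMod 2) ℂ)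
    (hK : ∑ k, (K k)ᴴ * K k = 1) :
    ∑ P : Pauli n, ∑ k, Complex.normSq (pcoef P (K k)) = 1 := by
  set σ : Matrix (Fin n → ZMod 2) (Fin n → ZMod 2) ℂ :=
    Matrix.single 0 0 1 with hσ
  have htrσ : σ.trace = 1 := by
    simp [hσ, Matrix.trace_single_eq_same]
  have h := congrArg Matrix.trace (twirl_kraus K σ)
  -- LHS trace
  rw [Matrix.trace_smul, Matrix.trace_sum] at h
  have hL : ∀ Q : Pauli n,
      ((PauliOp Q)ᴴ * (∑ k, K k * (PauliOp Q * σ * (PauliOp Q)ᴴ) * (K k)ᴴ) * PauliOp Q).trace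
        = 1 := by
    intro Q
    rw [trace_conj_unitary _ _ (PauliOp_unitary_right Q), Matrix.trace_sum]
    have : ∀ k, (K k * (PauliOp Q * σ * (PauliOp Q)ᴴ) * (K k)ᴴ).trace
        = ((K k)ᴴ * K k * (PauliOp Q * σ * (PauliOp Q)ᴴ)).trace := by
      intro k
      rw [Matrix.trace_mul_cycle]
    rw [Finset.sum_congr rfl (fun k _ => this k), ← Matrix.trace_sum,
      ← Finset.sum_mul, hK, Matrix.one_mul]
    have : (PauliOp Q * σ * (PauliOp Q)ᴴ).trace = σ.trace := by
      rw [Matrix.trace_mul_cycle, PauliOp_unitary_left, Matrix.one_mul]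
    rw [this, htrσ]
  rw [Finset.sum_congr rfl (fun Q (_ : Q ∈ Finset.univ) => hL Q), Finset.sum_const,
    Finset.card_univ] at h
  -- RHS trace
  have hR : ∀ P : Pauli n,
      ((((∑ k, Complex.normSq (pcoef P (K k))) : ℝ) : ℂ) •
          (PauliOp P * σ * (PauliOp P)ᴴ)).trace
        = (((∑ k, Complex.normSq (pcoef P (K k))) : ℝ) : ℂ) := by
    intro P
    rw [Matrix.trace_smul]
    have : (PauliOp P * σ * (PauliOp P)ᴴ).trace = σ.trace := by
      rw [Matrix.trace_mul_cycle, PauliOp_unitary_left, Matrix.one_mul]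
    rw [this, htrσ, smul_eq_mul, mul_one]
  rw [Matrix.trace_sum] at h
  rw [Finset.sum_congr rfl (fun P (_ : P ∈ Finset.univ) => hR P)] at h
  -- card (Pauli n) = 4^n
  have hcard : (Fintype.card (Pauli n) : ℂ) = (4 : ℂ) ^ n := by
    rw [Fintype.card_prod, Fintype.card_fun]
    push_cast
    rw [Fintype.card_fin, ZMod.card]
    rw [← mul_pow]
    norm_num
  rw [smul_eq_mul, nsmul_eq_mul, mul_one, hcard, inv_mul_cancel₀
    (pow_ne_zero _ (by norm_num : (4:ℂ) ≠ 0))] at h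
  have := h.symm
  exact_mod_cast this

lemma card_pauli_c (n : ℕ) : (Fintype.card (Pauli n) : ℂ) = (4 : ℂ) ^ n := by
  rw [Fintype.card_prod, Fintype.card_fun]
  push_cast
  rw [Fintype.card_fin, ZMod.card, ← mul_pow]
  norm_num


set_option maxHeartbeats 1000000 in
/-- if all easy cycles have the same (gate-independent) error
`ν(E) = Λ ∘ φ(E)`, then the effective dressed-cycle error channel
`E_i = ⟨φ(E⁻¹) φ(Q⁻¹) φ(H⁻¹) ν(H) ν(QER) φ(R⁻¹)⟩_{Q,R}` equals
`φ(E⁻¹) [φ(H⁻¹) ν(H) Λ]^{P_n} φ(E)`, the conjugate by the ideal easy gate of the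
Pauli twirl of the hard-cycle error.  In particular, when the combined hard-cycle
error `φ(H⁻¹) ∘ ν(H) ∘ Λ` is CPTP (Kraus operators `K`), `E_i` is a Pauli
stochastic channel conjugated by the fixed unitary channel `φ(E)`; and if `E` is
Clifford (normalizes the Pauli group up to phase), `E_i` is itself Pauli
stochastic. -/
theorem effective_error_gate_independent {n m : ℕ}
    (E H : Matrix (Fin n → ZMod 2) (Fin n → ZMod 2) ℂ)
    (nuH Lam : Matrix (Fin n → ZMod 2) (Fin n → ZMod 2) ℂ →
      Matrix (Fin n → ZMod 2) (Fin n → ZMod 2) ℂ)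
    (hE : Eᴴ * E = 1 ∧ E * Eᴴ = 1) (hH : Hᴴ * H = 1 ∧ H * Hᴴ = 1)
    (K : Fin m → Matrix (Fin n → ZMod 2) (Fin n → ZMod 2) ℂ)
    (hK : ∑ k, (K k)ᴴ * K k = 1)
    (hKraus : ∀ ρ, Hᴴ * nuH (Lam ρ) * H = ∑ k, K k * ρ * (K k)ᴴ) :
    -- the effective error channel equals φ(E⁻¹) ∘ [φ(H⁻¹) ν(H) Λ]^{P_n} ∘ φ(E):
    (∀ ρ : Matrix (Fin n → ZMod 2) (Fin n → ZMod 2) ℂ,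
      ((16 : ℂ) ^ n)⁻¹ • ∑ Q : Pauli n, ∑ R : Pauli n,
          Eᴴ * ((PauliOp Q)ᴴ * (Hᴴ *
            nuH (Lam ((PauliOp Q * E * PauliOp R) *
              ((PauliOp R)ᴴ * ρ * PauliOp R) * (PauliOp Q * E * PauliOp R)ᴴ))
            * H) * PauliOp Q) * E
        = Eᴴ * (((4 : ℂ) ^ n)⁻¹ • ∑ P : Pauli n,
            (PauliOp P)ᴴ * (Hᴴ *
              nuH (Lam (PauliOp P * (E * ρ * Eᴴ) * (PauliOp P)ᴴ)) * H) * PauliOp P) * E) ∧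
    -- it is a Pauli stochastic channel conjugated by the unitary channel φ(E):
    (∃ q : Pauli n → ℝ, (∀ P, 0 ≤ q P) ∧ (∑ P, q P = 1) ∧
      ∀ ρ : Matrix (Fin n → ZMod 2) (Fin n → ZMod 2) ℂ,
        ((16 : ℂ) ^ n)⁻¹ • ∑ Q : Pauli n, ∑ R : Pauli n,
            Eᴴ * ((PauliOp Q)ᴴ * (Hᴴ *
              nuH (Lam ((PauliOp Q * E * PauliOp R) *
                ((PauliOp R)ᴴ * ρ * PauliOp R) * (PauliOp Q * E * PauliOp R)ᴴ))
              * H) * PauliOp Q) * E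
          = Eᴴ * (∑ P : Pauli n,
              (q P : ℂ) • (PauliOp P * (E * ρ * Eᴴ) * (PauliOp P)ᴴ)) * E) ∧
    -- and if E is Clifford, it is itself a Pauli stochastic channel:
    ((∀ P : Pauli n, ∃ (P' : Pauli n) (c : ℂ), Eᴴ * PauliOp P * E = c • PauliOp P') →
      ∃ q' : Pauli n → ℝ, (∀ P, 0 ≤ q' P) ∧ (∑ P, q' P = 1) ∧
        ∀ ρ : Matrix (Fin n → ZMod 2) (Fin n → ZMod 2) ℂ,
          ((16 : ℂ) ^ n)⁻¹ • ∑ Q : Pauli n, ∑ R : Pauli n,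
              Eᴴ * ((PauliOp Q)ᴴ * (Hᴴ *
                nuH (Lam ((PauliOp Q * E * PauliOp R) *
                  ((PauliOp R)ᴴ * ρ * PauliOp R) * (PauliOp Q * E * PauliOp R)ᴴ))
                * H) * PauliOp Q) * E
            = ∑ P : Pauli n, (q' P : ℂ) • (PauliOp P * ρ * (PauliOp P)ᴴ)) := by
  obtain ⟨hE1, hE2⟩ := hE
  -- Part 1
  have harg : ∀ (ρ : Matrix (Fin n → ZMod 2) (Fin n → ZMod 2) ℂ) (Q R : Pauli n),
      (PauliOp Q * E * PauliOp R) * ((PauliOp R)ᴴ * ρ * PauliOp R) *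
          (PauliOp Q * E * PauliOp R)ᴴ
        = PauliOp Q * (E * ρ * Eᴴ) * (PauliOp Q)ᴴ := by
    intro ρ Q R
    have hRc : ∀ X : Matrix (Fin n → ZMod 2) (Fin n → ZMod 2) ℂ,
        PauliOp R * ((PauliOp R)ᴴ * X) = X := fun X => by
      rw [← Matrix.mul_assoc, PauliOp_unitary_right, Matrix.one_mul]
    simp only [conjTranspose_mul, conjTranspose_conjTranspose, Matrix.mul_assoc, hRc]
  have main1 : ∀ ρ : Matrix (Fin n → ZMod 2) (Fin n → ZMod 2) ℂ,
      ((16 : ℂ) ^ n)⁻¹ • ∑ Q : Pauli n, ∑ R : Pauli n,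
          Eᴴ * ((PauliOp Q)ᴴ * (Hᴴ *
            nuH (Lam ((PauliOp Q * E * PauliOp R) *
              ((PauliOp R)ᴴ * ρ * PauliOp R) * (PauliOp Q * E * PauliOp R)ᴴ))
            * H) * PauliOp Q) * E
        = ((4 : ℂ) ^ n)⁻¹ • ∑ P : Pauli n,
            Eᴴ * ((PauliOp P)ᴴ * (Hᴴ *
              nuH (Lam (PauliOp P * (E * ρ * Eᴴ) * (PauliOp P)ᴴ)) * H) * PauliOp P) * E := by
    intro ρ
    have hinner : ∀ Q : Pauli n,
        (∑ R : Pauli n,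
          Eᴴ * ((PauliOp Q)ᴴ * (Hᴴ *
            nuH (Lam ((PauliOp Q * E * PauliOp R) *
              ((PauliOp R)ᴴ * ρ * PauliOp R) * (PauliOp Q * E * PauliOp R)ᴴ))
            * H) * PauliOp Q) * E)
          = ((4 : ℂ) ^ n) •
              (Eᴴ * ((PauliOp Q)ᴴ * (Hᴴ *
                nuH (Lam (PauliOp Q * (E * ρ * Eᴴ) * (PauliOp Q)ᴴ)) * H) * PauliOp Q) * E) := by
      intro Q
      rw [Finset.sum_congr rfl (fun R (_ : R ∈ Finset.univ) => by rw [harg ρ Q R]),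
        Finset.sum_const, Finset.card_univ, ← Nat.cast_smul_eq_nsmul ℂ, card_pauli_c]
    rw [Finset.sum_congr rfl (fun Q (_ : Q ∈ Finset.univ) => hinner Q), ← Finset.smul_sum,
      smul_smul]
    congr 1
    rw [show (16 : ℂ) = 4 * 4 from by norm_num, mul_pow]
    rw [mul_inv, mul_assoc, inv_mul_cancel₀ (pow_ne_zero _ (by norm_num : (4:ℂ) ≠ 0)), mul_one]
  have pull : ∀ (S : Pauli n → Matrix (Fin n → ZMod 2) (Fin n → ZMod 2) ℂ),
      ((4 : ℂ) ^ n)⁻¹ • ∑ P : Pauli n, Eᴴ * S P * E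
        = Eᴴ * (((4 : ℂ) ^ n)⁻¹ • ∑ P : Pauli n, S P) * E := by
    intro S
    rw [mul_smul_comm, smul_mul_assoc, Finset.mul_sum, Finset.sum_mul]
  refine ⟨fun ρ => by rw [main1 ρ, pull], ?_, ?_⟩
  · -- Part 2
    refine ⟨fun P => ∑ k, Complex.normSq (pcoef P (K k)),
      fun P => Finset.sum_nonneg (fun k _ => Complex.normSq_nonneg _),
      q_sum_one K hK, fun ρ => ?_⟩
    rw [main1 ρ, pull]
    congr 1
    have : (∑ P : Pauli n,
        (PauliOp P)ᴴ * (Hᴴ *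
          nuH (Lam (PauliOp P * (E * ρ * Eᴴ) * (PauliOp P)ᴴ)) * H) * PauliOp P)
        = ∑ P : Pauli n,
          (PauliOp P)ᴴ * (∑ k, K k * (PauliOp P * (E * ρ * Eᴴ) * (PauliOp P)ᴴ) * (K k)ᴴ) *
            PauliOp P :=
      Finset.sum_congr rfl (fun P _ => by rw [hKraus])
    rw [this, twirl_kraus]
  · -- Part 3
    intro hC
    set q : Pauli n → ℝ := fun P => ∑ k, Complex.normSq (pcoef P (K k)) with hqdef
    choose f c hfc using hC
    have hEc : ∀ X : Matrix (Fin n → ZMod 2) (Fin n → ZMod 2) ℂ,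
        E * (Eᴴ * X) = X := fun X => by rw [← Matrix.mul_assoc, hE2, Matrix.one_mul]
    have hc1 : ∀ P : Pauli n, star (c P) * c P = 1 := by
      intro P
      have hPc : ∀ X : Matrix (Fin n → ZMod 2) (Fin n → ZMod 2) ℂ,
          (PauliOp P)ᴴ * (PauliOp P * X) = X := fun X => by
        rw [← Matrix.mul_assoc, PauliOp_unitary_left, Matrix.one_mul]
      have hunit : (Eᴴ * PauliOp P * E)ᴴ * (Eᴴ * PauliOp P * E) = 1 := by
        simp only [conjTranspose_mul, conjTranspose_conjTranspose, Matrix.mul_assoc, hEc, hPc]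
        exact hE1
      rw [hfc P, conjTranspose_smul, smul_mul_assoc, mul_smul_comm, smul_smul,
        PauliOp_unitary_left] at hunit
      have h00 := congrFun (congrFun hunit (fun _ => 0)) (fun _ => 0)
      simpa [Matrix.smul_apply, Matrix.one_apply_eq] using h00
    refine ⟨fun P'' => ∑ P ∈ Finset.univ.filter (fun P => f P = P''), q P,
      fun P'' => Finset.sum_nonneg (fun P _ =>
        Finset.sum_nonneg (fun k _ => Complex.normSq_nonneg _)),
      by rw [Finset.sum_fiberwise Finset.univ f q]; exact q_sum_one K hK,
      fun ρ => ?_⟩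
    -- channel equality
    have step2 : ((16 : ℂ) ^ n)⁻¹ • ∑ Q : Pauli n, ∑ R : Pauli n,
            Eᴴ * ((PauliOp Q)ᴴ * (Hᴴ *
              nuH (Lam ((PauliOp Q * E * PauliOp R) *
                ((PauliOp R)ᴴ * ρ * PauliOp R) * (PauliOp Q * E * PauliOp R)ᴴ))
              * H) * PauliOp Q) * E
          = Eᴴ * (∑ P : Pauli n,
              (q P : ℂ) • (PauliOp P * (E * ρ * Eᴴ) * (PauliOp P)ᴴ)) * E := by
      rw [main1 ρ, pull]
      congr 1
      have : (∑ P : Pauli n,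
          (PauliOp P)ᴴ * (Hᴴ *
            nuH (Lam (PauliOp P * (E * ρ * Eᴴ) * (PauliOp P)ᴴ)) * H) * PauliOp P)
          = ∑ P : Pauli n,
            (PauliOp P)ᴴ * (∑ k, K k * (PauliOp P * (E * ρ * Eᴴ) * (PauliOp P)ᴴ) * (K k)ᴴ) *
              PauliOp P :=
        Finset.sum_congr rfl (fun P _ => by rw [hKraus])
      rw [this, twirl_kraus]
    rw [step2]
    have sandwich : ∀ P : Pauli n,
        Eᴴ * ((q P : ℂ) • (PauliOp P * (E * ρ * Eᴴ) * (PauliOp P)ᴴ)) * E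
          = (q P : ℂ) • (PauliOp (f P) * ρ * (PauliOp (f P))ᴴ) := by
      intro P
      rw [mul_smul_comm, smul_mul_assoc]
      congr 1
      have : Eᴴ * (PauliOp P * (E * ρ * Eᴴ) * (PauliOp P)ᴴ) * E
          = (Eᴴ * PauliOp P * E) * ρ * (Eᴴ * PauliOp P * E)ᴴ := by
        simp only [conjTranspose_mul, conjTranspose_conjTranspose, Matrix.mul_assoc]
      rw [this, hfc P, conjTranspose_smul, smul_mul_assoc, mul_smul_comm,
        smul_mul_assoc, smul_smul, hc1 P, one_smul]
    rw [Finset.mul_sum, Finset.sum_mul,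
      Finset.sum_congr rfl (fun P (_ : P ∈ Finset.univ) => sandwich P)]
    symm
    rw [← Finset.sum_fiberwise Finset.univ f
      (fun P => (q P : ℂ) • (PauliOp (f P) * ρ * (PauliOp (f P))ᴴ))]
    refine Finset.sum_congr rfl (fun j _ => ?_)
    rw [Complex.ofReal_sum, Finset.sum_smul]
    refine Finset.sum_congr rfl (fun P hP => ?_)
    rw [(Finset.mem_filter.1 hP).2]
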